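/- Let n ≥ k ≥ 1 and d ≥ 2, and let F be a d-simplex-free family of subsets of an n-element set X, all of size at most n−k, containing some set Y of size exactly n−k. Then |F| ≤ f(n−k, d) + Σ_{i=1}^{k} C(k,i) · f(n−k, d−1, i), where f(m,d) is the maximum size of a d-simplex-free family of subsets of an m-element set, and f(m,d,i) is the maximum size of a d-simplex-free family of subsets of an m-element set all of whose members have size at most m−i. -/

import Mathlib

open Finset

/-- A `d`-simplex: `d+1` sets whose total intersection is empty but such that
the intersection of any `d` of them is nonempty. -/
def IsSimplex {α : Type*} [DecidableEq α] (d : ℕ) (A : Fin (d + 1) → Finset α) : Prop :=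
  (⋂ i, (A i : Set α)) = ∅ ∧
    ∀ j : Fin (d + 1), (⋂ i, ⋂ (_ : i ≠ j), (A i : Set α)).Nonempty

/-- A family is `d`-simplex-free if it contains no `d`-simplex. -/
def SimplexFree {α : Type*} [DecidableEq α] (d : ℕ) (F : Finset (Finset α)) : Prop :=
  ¬ ∃ A : Fin (d + 1) → Finset α, (∀ i, A i ∈ F) ∧ IsSimplex d A
/-- The maximum size of a d-simplex-free family of subsets of an m-element set. -/
noncomputable def maxFree (m d : ℕ) : ℕ :=
  sSup {s | ∃ F : Finset (Finset (Fin m)), SimplexFree d F ∧ F.card = s}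

/-- The maximum size of a d-simplex-free family of subsets of an m-element set,
all of whose members have size at most m - i. -/
noncomputable def maxFreeLe (m d i : ℕ) : ℕ :=
  sSup {s | ∃ F : Finset (Finset (Fin m)), SimplexFree d F ∧
    (∀ A ∈ F, A.card ≤ m - i) ∧ F.card = s}

lemma simplexFree_subset {α : Type*} [DecidableEq α] {d : ℕ} {F G : Finset (Finset α)}
    (h : G ⊆ F) (hF : SimplexFree d F) : SimplexFree d G := by
  rintro ⟨A, hA, hs⟩
  exact hF ⟨A, fun i => h (hA i), hs⟩

/-- Transfer a simplex-free family of subsets of `Y` to a family over `Fin Y.card`. -/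
lemma exists_copy {α : Type*} [DecidableEq α] (Y : Finset α) (d : ℕ) (G : Finset (Finset α))
    (hsub : ∀ A ∈ G, A ⊆ Y) (hfree : SimplexFree d G) :
    ∃ G' : Finset (Finset (Fin Y.card)), SimplexFree d G' ∧ G'.card = G.card ∧
      ∀ B ∈ G', ∃ A ∈ G, B.card = A.card := by
  classical
  set e := Y.equivFin with he
  set ψ : Finset α → Finset (Fin Y.card) :=
    fun A => (A.subtype (· ∈ Y)).map e.toEmbedding with hψ
  have hmem : ∀ (A : Finset α) (j : Fin Y.card), j ∈ ψ A ↔ (e.symm j : α) ∈ A := by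
    intro A j
    simp only [hψ, Finset.mem_map, Finset.mem_subtype, Equiv.coe_toEmbedding]
    constructor
    · rintro ⟨x, hx, rfl⟩; simpa using hx
    · intro h; exact ⟨e.symm j, h, by simp⟩
  have hcardψ : ∀ A ∈ G, (ψ A).card = A.card := by
    intro A hA
    rw [hψ]
    simp only [Finset.card_map, Finset.card_subtype]
    rw [Finset.filter_true_of_mem (fun x hx => hsub A hA hx)]
  have hinj : Set.InjOn ψ (G : Set (Finset α)) := by
    intro A₁ h₁ A₂ h₂ hE
    ext x
    constructor
    · intro hx
      have hxY : x ∈ Y := hsub A₁ h₁ hx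
      have : e ⟨x, hxY⟩ ∈ ψ A₁ := (hmem A₁ _).2 (by simpa using hx)
      rw [hE] at this
      simpa using (hmem A₂ _).1 this
    · intro hx
      have hxY : x ∈ Y := hsub A₂ h₂ hx
      have : e ⟨x, hxY⟩ ∈ ψ A₂ := (hmem A₂ _).2 (by simpa using hx)
      rw [← hE] at this
      simpa using (hmem A₁ _).1 this
  refine ⟨G.image ψ, ?_, Finset.card_image_of_injOn hinj, ?_⟩
  · rintro ⟨B, hB, hBempty, hBne⟩
    have hex : ∀ i, ∃ A ∈ G, ψ A = B i := fun i => Finset.mem_image.mp (hB i)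
    choose A hAG hAψ using hex
    refine hfree ⟨A, hAG, ?_, ?_⟩
    · rw [Set.eq_empty_iff_forall_notMem]
      intro x hx
      rw [Set.mem_iInter] at hx
      have hxY : x ∈ Y := hsub _ (hAG 0) (by simpa using hx 0)
      have : e ⟨x, hxY⟩ ∈ (⋂ i, ((B i : Finset (Fin Y.card)) : Set (Fin Y.card))) := by
        rw [Set.mem_iInter]
        intro i
        have : e ⟨x, hxY⟩ ∈ ψ (A i) := (hmem (A i) _).2 (by simpa using hx i)
        rw [hAψ i] at this
        simpa using this
      rw [hBempty] at this
      exact this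
    · intro j
      obtain ⟨y, hy⟩ := hBne j
      rw [Set.mem_iInter] at hy
      refine ⟨(e.symm y : α), ?_⟩
      rw [Set.mem_iInter]
      intro i
      rw [Set.mem_iInter]
      intro hij
      have hy' := hy i
      rw [Set.mem_iInter] at hy'
      have : y ∈ B i := by simpa using hy' hij
      rw [← hAψ i] at this
      simpa using (hmem (A i) y).1 this
  · intro B hB
    obtain ⟨A, hA, rfl⟩ := Finset.mem_image.mp hB
    exact ⟨A, hA, hcardψ A hA⟩

lemma bddAbove_maxFree (m d : ℕ) :
    BddAbove {s | ∃ F : Finset (Finset (Fin m)), SimplexFree d F ∧ F.card = s} := by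
  refine ⟨Fintype.card (Finset (Fin m)), ?_⟩
  rintro s ⟨F, _, rfl⟩
  exact Finset.card_le_univ F

lemma bddAbove_maxFreeLe (m d i : ℕ) :
    BddAbove {s | ∃ F : Finset (Finset (Fin m)), SimplexFree d F ∧
      (∀ A ∈ F, A.card ≤ m - i) ∧ F.card = s} := by
  refine ⟨Fintype.card (Finset (Fin m)), ?_⟩
  rintro s ⟨F, _, _, rfl⟩
  exact Finset.card_le_univ F

lemma card_le_maxFree {α : Type*} [DecidableEq α] (Y : Finset α) (d : ℕ)
    (G : Finset (Finset α)) (hsub : ∀ A ∈ G, A ⊆ Y) (hfree : SimplexFree d G) :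
    G.card ≤ maxFree Y.card d := by
  obtain ⟨G', hfree', hcard, -⟩ := exists_copy Y d G hsub hfree
  rw [← hcard]
  exact le_csSup (bddAbove_maxFree _ _) ⟨G', hfree', rfl⟩

lemma card_le_maxFreeLe {α : Type*} [DecidableEq α] (Y : Finset α) (d i : ℕ)
    (G : Finset (Finset α)) (hsub : ∀ A ∈ G, A ⊆ Y)
    (hc : ∀ A ∈ G, A.card ≤ Y.card - i) (hfree : SimplexFree d G) :
    G.card ≤ maxFreeLe Y.card d i := by
  obtain ⟨G', hfree', hcard, hco⟩ := exists_copy Y d G hsub hfree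
  rw [← hcard]
  refine le_csSup (bddAbove_maxFreeLe _ _ _) ⟨G', hfree', ?_, rfl⟩
  intro B hB
  obtain ⟨A, hA, hBA⟩ := hco B hB
  rw [hBA]
  exact hc A hA

theorem stmt3 {α : Type*} [DecidableEq α] (n k d : ℕ) (hk : 1 ≤ k) (hkn : k ≤ n)
    (hd : 2 ≤ d) (X : Finset α) (hX : X.card = n) (F : Finset (Finset α))
    (hF : F ⊆ X.powerset) (hsize : ∀ A ∈ F, A.card ≤ n - k)
    (hY : ∃ Y ∈ F, Y.card = n - k) (hfree : SimplexFree d F) :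
    F.card ≤ maxFree (n - k) d +
      ∑ i ∈ Finset.Icc 1 k, k.choose i * maxFreeLe (n - k) (d - 1) i := by
  classical
  obtain ⟨e, rfl⟩ : ∃ e, d = e + 2 := ⟨d - 2, by omega⟩
  obtain ⟨Y, hYF, hYcard⟩ := hY
  have hYX : Y ⊆ X := Finset.mem_powerset.mp (hF hYF)
  set T := X \ Y with hT
  have hTcard : T.card = k := by
    rw [hT, Finset.card_sdiff_of_subset hYX, hX, hYcard]; omega
  have hfib : ∀ A ∈ F, A \ Y ∈ T.powerset := by
    intro A hA
    rw [Finset.mem_powerset, hT]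
    exact Finset.sdiff_subset_sdiff (Finset.mem_powerset.mp (hF hA)) (Finset.Subset.refl Y)
  have hsum : F.card = ∑ S ∈ T.powerset, (F.filter fun A => A \ Y = S).card :=
    Finset.card_eq_sum_card_fiberwise hfib
  -- decompose A = (A ∩ Y) ∪ (A \ Y)
  have hdecomp : ∀ A : Finset α, A ∩ Y ∪ A \ Y = A := by
    intro A; ext x
    simp only [Finset.mem_union, Finset.mem_inter, Finset.mem_sdiff]
    tauto
  -- bound for the empty fiber
  have h0 : (F.filter fun A => A \ Y = ∅).card ≤ maxFree (n - k) (e + 2) := by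
    have := card_le_maxFree Y (e + 2) (F.filter fun A => A \ Y = ∅)
      (fun A hA => Finset.sdiff_eq_empty_iff_subset.mp (Finset.mem_filter.mp hA).2)
      (simplexFree_subset (Finset.filter_subset _ _) hfree)
    rwa [hYcard] at this
  -- bound for nonempty fibers
  have hfiber : ∀ S ∈ T.powerset, S ≠ ∅ →
      (F.filter fun A => A \ Y = S).card ≤ maxFreeLe (n - k) (e + 1) S.card := by
    intro S hS hSne
    have hST : S ⊆ T := Finset.mem_powerset.mp hS
    have hSdisj : Disjoint S Y :=
      Finset.disjoint_of_subset_left hST (Finset.sdiff_disjoint)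
    set G := F.filter fun A => A \ Y = S with hG
    set GS := G.image (· ∩ Y) with hGS
    have hGmem : ∀ A ∈ G, A ∈ F ∧ A \ Y = S := fun A hA => Finset.mem_filter.mp hA
    -- injectivity of intersecting with Y on the fiber
    have hinj : Set.InjOn (· ∩ Y) (G : Set (Finset α)) := by
      intro A₁ h₁ A₂ h₂ hE
      have e₁ := (hGmem A₁ h₁).2
      have e₂ := (hGmem A₂ h₂).2
      calc A₁ = A₁ ∩ Y ∪ A₁ \ Y := (hdecomp A₁).symm
        _ = A₂ ∩ Y ∪ A₂ \ Y := by rw [e₁, e₂]; simp only at hE; rw [hE]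
        _ = A₂ := hdecomp A₂
    have hcardGS : GS.card = G.card := Finset.card_image_of_injOn hinj
    -- members of GS : subsets of Y with the right union form
    have hGSmem : ∀ B ∈ GS, B ⊆ Y ∧ B ∪ S ∈ F ∧ B.card ≤ Y.card - S.card := by
      intro B hB
      obtain ⟨A, hA, rfl⟩ := Finset.mem_image.mp hB
      obtain ⟨hAF, hAS⟩ := hGmem A hA
      refine ⟨Finset.inter_subset_right, ?_, ?_⟩
      · have : A ∩ Y ∪ S = A := by rw [← hAS]; exact hdecomp A
        rw [this]; exact hAF
      · have hc : (A ∩ Y).card + S.card = A.card := by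
          rw [← hAS]; exact Finset.card_inter_add_card_sdiff A Y
        have hAc : A.card ≤ n - k := hsize A hAF
        rw [hYcard]
        omega
    -- GS is (e+1)-simplex-free
    have hGSfree : SimplexFree (e + 1) GS := by
      rintro ⟨B, hB, hBempty, hBne⟩
      set C : Fin (e + 3) → Finset α := Fin.snoc (fun i => B i ∪ S) Y with hC
      have hClast : C (Fin.last (e + 2)) = Y := Fin.snoc_last _ _
      have hCcast : ∀ i : Fin (e + 2), C i.castSucc = B i ∪ S :=
        fun i => Fin.snoc_castSucc _ _ i
      refine hfree ⟨C, ?_, ?_, ?_⟩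
      · intro i
        induction i using Fin.lastCases with
        | last => rw [hClast]; exact hYF
        | cast i => rw [hCcast]; exact (hGSmem _ (hB i)).2.1
      · rw [Set.eq_empty_iff_forall_notMem]
        intro x hx
        rw [Set.mem_iInter] at hx
        have hxY : x ∈ Y := by
          have := hx (Fin.last (e + 2)); rw [hClast] at this; simpa using this
        have hxB : ∀ i : Fin (e + 2), x ∈ B i := by
          intro i
          have := hx i.castSucc
          rw [hCcast] at this
          simp only [Finset.coe_union, Set.mem_union, Finset.mem_coe] at this
          rcases this with h | h
          · exact h
          · exact absurd hxY (Finset.disjoint_left.mp hSdisj h)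
        have hE := hBempty
        rw [Set.eq_empty_iff_forall_notMem] at hE
        exact hE x (Set.mem_iInter.mpr fun i => by simpa using hxB i)
      · intro j
        induction j using Fin.lastCases with
        | last =>
          obtain ⟨s, hs⟩ := Finset.nonempty_iff_ne_empty.mpr hSne
          refine ⟨s, ?_⟩
          rw [Set.mem_iInter]
          intro i
          rw [Set.mem_iInter]
          intro hij
          induction i using Fin.lastCases with
          | last => exact absurd rfl hij
          | cast i => rw [hCcast]; simp [hs]
        | cast j =>
          obtain ⟨y, hy⟩ := hBne j
          rw [Set.mem_iInter] at hy
          have hyB : ∀ i : Fin (e + 2), i ≠ j → y ∈ B i := by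
            intro i hij
            have := hy i
            rw [Set.mem_iInter] at this
            simpa using this hij
          refine ⟨y, ?_⟩
          rw [Set.mem_iInter]
          intro i
          rw [Set.mem_iInter]
          intro hij
          induction i using Fin.lastCases with
          | last =>
            obtain ⟨i'', hi''⟩ := Fintype.exists_ne_of_one_lt_card
              (by simp : 1 < Fintype.card (Fin (e + 2))) j
            have := hyB i'' hi''
            rw [hClast]
            exact (hGSmem _ (hB i'')).1 this
          | cast i =>
            have hij' : i ≠ j := fun h => hij (by rw [h])
            rw [hCcast]
            simp only [Finset.coe_union, Set.mem_union, Finset.mem_coe]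
            exact Or.inl (hyB i hij')
    -- conclude fiber bound
    have := card_le_maxFreeLe Y (e + 1) S.card GS
      (fun B hB => (hGSmem B hB).1) (fun B hB => (hGSmem B hB).2.2) hGSfree
    rw [hYcard] at this
    rw [← hcardGS]
    exact this
  -- assemble
  rw [hsum, Finset.sum_powerset, hTcard,
    Finset.sum_range_succ']
  have hzero : ∑ S ∈ T.powersetCard 0, (F.filter fun A => A \ Y = S).card
      = (F.filter fun A => A \ Y = ∅).card := by
    rw [Finset.powersetCard_zero, Finset.sum_singleton]
  rw [hzero, add_comm]
  have hsum2 : ∀ i ∈ Finset.range k,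
      ∑ S ∈ T.powersetCard (i + 1), (F.filter fun A => A \ Y = S).card
        ≤ k.choose (i + 1) * maxFreeLe (n - k) (e + 1) (i + 1) := by
    intro i _
    calc ∑ S ∈ T.powersetCard (i + 1), (F.filter fun A => A \ Y = S).card
        ≤ ∑ S ∈ T.powersetCard (i + 1), maxFreeLe (n - k) (e + 1) (i + 1) := by
          refine Finset.sum_le_sum ?_
          intro S hS
          have hSm := Finset.mem_powersetCard.mp hS
          have hScard : S.card = i + 1 := hSm.2
          have hSne : S ≠ ∅ := by
            intro h; rw [h] at hScard; simp at hScard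
          have := hfiber S (Finset.mem_powerset.mpr hSm.1) hSne
          rwa [hScard] at this
      _ = k.choose (i + 1) * maxFreeLe (n - k) (e + 1) (i + 1) := by
          rw [Finset.sum_const, Finset.card_powersetCard, hTcard, smul_eq_mul]
  have hIcc : ∑ i ∈ Finset.Icc 1 k, k.choose i * maxFreeLe (n - k) (e + 2 - 1) i
      = ∑ i ∈ Finset.range k, k.choose (i + 1) * maxFreeLe (n - k) (e + 1) (i + 1) := by
    rw [← Finset.Ico_add_one_right_eq_Icc, Finset.sum_Ico_eq_sum_range]
    simp [Nat.add_comm]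
  rw [hIcc]
  have : e + 2 - 1 = e + 1 := rfl
  exact Nat.add_le_add h0 (Finset.sum_le_sum hsum2)
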